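/- Let r > 0, μ > r, σ > 0, λ > 0, p > r, and set q := min(μ, p). For b ∈ [r, q) define m_b := (μ−b)²/(2σ²) and a_b := ((b−p+λ+m_b) + √((b−p+λ+m_b)² + 4λ(p−b)))/(2(p−b)). Then a_b → a_r as b → r⁺, where a_r is a_b evaluated at b = r, and (μ−b)/(σ²(a_b+1)) → 0 as b → q⁻. -/

import Mathlib

open Filter Topology

theorem stmt_13 (r mu sigma lam p : ℝ)
    (hr : 0 < r) (hmu : r < mu) (hs : 0 < sigma) (hlam : 0 < lam) (hp : r < p)
    (q : ℝ) (hq : q = min mu p)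
    (mb a : ℝ → ℝ)
    (hmb : ∀ b, mb b = (mu - b)^2 / (2 * sigma^2))
    (ha : ∀ b, a b = ((b - p + lam + mb b)
            + Real.sqrt ((b - p + lam + mb b)^2 + 4*lam*(p - b))) / (2*(p - b))) :
    Tendsto a (𝓝[>] r) (𝓝 (a r)) ∧
    Tendsto (fun b => (mu - b) / (sigma^2 * (a b + 1))) (𝓝[<] q) (𝓝 0) := by
  have hA : a = fun b => ((b - p + lam + (mu - b)^2 / (2 * sigma^2))
      + Real.sqrt ((b - p + lam + (mu - b)^2 / (2 * sigma^2))^2 + 4*lam*(p - b)))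
      / (2*(p - b)) := by
    funext b; rw [ha b, hmb b]
  have hs2 : (0:ℝ) < sigma^2 := by positivity
  -- continuity of a at any point where p - b ≠ 0
  have hcont : ∀ x : ℝ, x < p → ContinuousAt a x := by
    intro x hx
    rw [hA]
    have hden : (2*(p - x)) ≠ 0 := by nlinarith
    apply ContinuousAt.div
    · apply ContinuousAt.add
      · fun_prop
      · exact Real.continuous_sqrt.continuousAt.comp (by fun_prop)
    · fun_prop
    · exact hden
  constructor
  · exact ((hcont r hp).continuousWithinAt)
  · rcases le_or_gt p mu with hpm | hpm
    · -- q = p, a b → +∞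
      rw [hq, min_eq_right hpm]
      set N : ℝ → ℝ := fun b => (b - p + lam + (mu - b)^2 / (2 * sigma^2))
          + Real.sqrt ((b - p + lam + (mu - b)^2 / (2 * sigma^2))^2 + 4*lam*(p - b)) with hN
      have hm : (0:ℝ) ≤ (mu - p)^2 / (2 * sigma^2) := by positivity
      have hNp : N p = 2 * (lam + (mu - p)^2 / (2 * sigma^2)) := by
        have : p - p + lam + (mu - p)^2 / (2 * sigma^2) = lam + (mu - p)^2 / (2 * sigma^2) := by ring
        simp only [hN, this]
        rw [show 4*lam*(p-p) = 0 by ring, add_zero, Real.sqrt_sq (by positivity)]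
        ring
      have hNppos : 0 < N p := by rw [hNp]; positivity
      have hNcont : ContinuousAt N p := by
        apply ContinuousAt.add
        · fun_prop
        · exact Real.continuous_sqrt.continuousAt.comp (by fun_prop)
      have hNt : Tendsto N (𝓝[<] p) (𝓝 (N p)) :=
        (hNcont.continuousWithinAt)
      have hinv : Tendsto (fun b => (2*(p - b))⁻¹) (𝓝[<] p) atTop := by
        apply tendsto_inv_nhdsGT_zero.comp
        rw [tendsto_nhdsWithin_iff]
        constructor
        · have h2 : Tendsto (fun b : ℝ => 2*(p-b)) (𝓝 p) (𝓝 (2*(p-p))) :=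
            ((continuous_const.mul (continuous_const.sub continuous_id)).tendsto p)
          rw [show (2:ℝ)*(p-p) = 0 by ring] at h2
          exact h2.mono_left nhdsWithin_le_nhds
        · filter_upwards [self_mem_nhdsWithin] with b hb
          have : b < p := hb
          exact Set.mem_Ioi.mpr (by nlinarith)
      have hTa : Tendsto a (𝓝[<] p) atTop := by
        have := Tendsto.pos_mul_atTop hNppos hNt hinv
        refine this.congr (fun b => ?_)
        rw [hA]
        simp only [hN, div_eq_mul_inv]
      have hD : Tendsto (fun b => sigma^2 * (a b + 1)) (𝓝[<] p) atTop :=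
        Tendsto.const_mul_atTop hs2 (tendsto_atTop_add_const_right _ 1 hTa)
      have hDinv : Tendsto (fun b => (sigma^2 * (a b + 1))⁻¹) (𝓝[<] p) (𝓝 0) :=
        hD.inv_tendsto_atTop
      have hnum : Tendsto (fun b : ℝ => mu - b) (𝓝[<] p) (𝓝 (mu - p)) :=
        ((continuous_const.sub continuous_id).continuousAt (x := p)).continuousWithinAt
      have := hnum.mul hDinv
      rw [mul_zero] at this
      refine this.congr (fun b => ?_)
      rw [div_eq_mul_inv]
    · -- q = mu < p, continuity and value 0
      rw [hq, min_eq_left hpm.le]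
      have hamu : 0 < a mu := by
        rw [hA]
        set x := mu - p + lam + (mu - mu)^2 / (2 * sigma^2) with hx
        have hc : (0:ℝ) < 4*lam*(p - mu) := by nlinarith
        have hsq : |x| < Real.sqrt (x^2 + 4*lam*(p - mu)) := by
          rw [← Real.sqrt_sq_eq_abs]
          exact Real.sqrt_lt_sqrt (sq_nonneg x) (by linarith)
        have hnum : 0 < x + Real.sqrt (x^2 + 4*lam*(p - mu)) := by
          have := neg_abs_le x
          linarith
        exact div_pos hnum (by nlinarith)
      have hden : sigma^2 * (a mu + 1) ≠ 0 := by positivity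
      have hc : ContinuousAt (fun b => (mu - b) / (sigma^2 * (a b + 1))) mu := by
        apply ContinuousAt.div
        · fun_prop
        · exact continuousAt_const.mul (((hcont mu hpm).add continuousAt_const))
        · exact hden
      have h0 : (mu - mu) / (sigma^2 * (a mu + 1)) = 0 := by simp
      have h2 : Tendsto (fun b => (mu - b) / (sigma ^ 2 * (a b + 1))) (𝓝[<] mu)
          (𝓝 ((mu - mu) / (sigma ^ 2 * (a mu + 1)))) := hc.continuousWithinAt
      rwa [h0] at h2
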